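/- For all d ∈ F one has d² + d ≠ (t + u)³. -/
import Mathlib

open MvPolynomial

theorem cube_ne_artinSchreier
    (d : FractionRing (MvPolynomial (Fin 2) (ZMod 2))) :
    d ^ 2 + d ≠
      (algebraMap (MvPolynomial (Fin 2) (ZMod 2))
          (FractionRing (MvPolynomial (Fin 2) (ZMod 2))) (MvPolynomial.X 0) +
        algebraMap (MvPolynomial (Fin 2) (ZMod 2))
          (FractionRing (MvPolynomial (Fin 2) (ZMod 2))) (MvPolynomial.X 1)) ^ 3 := by
  intro h
  obtain ⟨⟨p, q⟩, hd⟩ :=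
    IsLocalization.surj (nonZeroDivisors (MvPolynomial (Fin 2) (ZMod 2))) d
  have hq0 : (q : MvPolynomial (Fin 2) (ZMod 2)) ≠ 0 := nonZeroDivisors.coe_ne_zero q
  have hs0 : (X 0 + X 1 : MvPolynomial (Fin 2) (ZMod 2)) ≠ 0 := by
    intro hc
    have := congrArg (eval (fun i : Fin 2 => if i = 0 then (1 : ZMod 2) else 0)) hc
    simp at this
  -- clear denominators
  have key : p * (p + (q : MvPolynomial (Fin 2) (ZMod 2))) =
      (X 0 + X 1) ^ 3 * (q : MvPolynomial (Fin 2) (ZMod 2)) ^ 2 := by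
    apply IsFractionRing.injective (MvPolynomial (Fin 2) (ZMod 2))
      (FractionRing (MvPolynomial (Fin 2) (ZMod 2)))
    set f := algebraMap (MvPolynomial (Fin 2) (ZMod 2))
      (FractionRing (MvPolynomial (Fin 2) (ZMod 2))) with hf
    have hd' : f p = d * f (q : MvPolynomial (Fin 2) (ZMod 2)) := by
      simpa [hf] using hd.symm
    calc f (p * (p + (q : MvPolynomial (Fin 2) (ZMod 2))))
        = (d * f q) * (d * f q + f q) := by rw [map_mul, map_add, hd']
      _ = (d ^ 2 + d) * (f q) ^ 2 := by ring
      _ = (f (X 0) + f (X 1)) ^ 3 * (f q) ^ 2 := by rw [h]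
      _ = f ((X 0 + X 1) ^ 3 * (q : MvPolynomial (Fin 2) (ZMod 2)) ^ 2) := by
          simp only [map_mul, map_pow, map_add]
  have hrhs0 : (X 0 + X 1 : MvPolynomial (Fin 2) (ZMod 2)) ^ 3 *
      (q : MvPolynomial (Fin 2) (ZMod 2)) ^ 2 ≠ 0 :=
    mul_ne_zero (pow_ne_zero _ hs0) (pow_ne_zero _ hq0)
  have hp0 : p ≠ 0 := by
    intro hc; rw [hc, zero_mul] at key; exact hrhs0 key.symm
  have hpq0 : p + (q : MvPolynomial (Fin 2) (ZMod 2)) ≠ 0 := by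
    intro hc; rw [hc, mul_zero] at key; exact hrhs0 key.symm
  -- move to Polynomial (MvPolynomial (Fin 1) (ZMod 2))
  have hφinj : Function.Injective (finSuccEquiv (ZMod 2) 1) :=
    (finSuccEquiv (ZMod 2) 1).injective
  set P := finSuccEquiv (ZMod 2) 1 p with hP
  set Q := finSuccEquiv (ZMod 2) 1 (q : MvPolynomial (Fin 2) (ZMod 2)) with hQ
  have hP0 : P ≠ 0 := by
    rw [hP, map_ne_zero_iff _ hφinj]; exact hp0
  have hQ0 : Q ≠ 0 := by
    rw [hQ, map_ne_zero_iff _ hφinj]; exact hq0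
  have hPQ0 : P + Q ≠ 0 := by
    rw [hP, hQ, ← map_add, map_ne_zero_iff _ hφinj]; exact hpq0
  have hS : finSuccEquiv (ZMod 2) 1 (X 0 + X 1 : MvPolynomial (Fin 2) (ZMod 2)) =
      Polynomial.X + Polynomial.C (X 0) := by
    have h1 : (X 1 : MvPolynomial (Fin 2) (ZMod 2)) = X (Fin.succ 0) := by norm_num
    rw [map_add, h1, finSuccEquiv_X_zero, finSuccEquiv_X_succ]
  have hSdeg : (Polynomial.X + Polynomial.C (X 0) :
      Polynomial (MvPolynomial (Fin 1) (ZMod 2))).natDegree = 1 :=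
    Polynomial.natDegree_X_add_C _
  have hS0 : (Polynomial.X + Polynomial.C (X 0) :
      Polynomial (MvPolynomial (Fin 1) (ZMod 2))) ≠ 0 := by
    intro hc
    rw [hc] at hSdeg
    simp at hSdeg
  have keydeg : P.natDegree + (P + Q).natDegree = 3 + 2 * Q.natDegree := by
    have h2 := congrArg Polynomial.natDegree
      (congrArg (finSuccEquiv (ZMod 2) 1) key)
    rw [map_mul, map_mul, map_pow, map_pow, map_add, hS, ← hP, ← hQ] at h2
    rw [Polynomial.natDegree_mul hP0 hPQ0] at h2
    rw [Polynomial.natDegree_mul (pow_ne_zero _ hS0) (pow_ne_zero _ hQ0)] at h2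
    rw [Polynomial.natDegree_pow, Polynomial.natDegree_pow, hSdeg] at h2
    omega
  rcases le_or_gt P.natDegree Q.natDegree with hle | hlt
  · have h1 : (P + Q).natDegree ≤ Q.natDegree :=
      le_trans (Polynomial.natDegree_add_le P Q) (by omega)
    omega
  · have h1 : (P + Q).natDegree = P.natDegree :=
      Polynomial.natDegree_add_eq_left_of_natDegree_lt hlt
    omega
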